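/- Let f be an orientation-preserving piecewise contraction of the circle ℝ/ℤ with k discontinuity points, right continuous at each of them. Then f has at most k periodic orbits. -/

import Mathlib

open Set Filter Topology

namespace Stmt5

/-- integers with close casts are equal -/
lemma int_close (a b : ℤ) (h : |(a:ℝ) - b| < 1) : a = b := by
  have h2 : |((a - b : ℤ) : ℝ)| < ((1:ℤ):ℝ) := by push_cast; simpa using h
  rw [← Int.cast_abs, Int.cast_lt] at h2
  have := abs_lt.mp h2
  omega

/-- a real sequence tending to 0 that differs from a constant by integers:
the constant is an integer and the sequence is eventually 0. -/
lemma intlim (w : ℕ → ℝ) (v : ℝ) (hint : ∀ t, ∃ c : ℤ, (c:ℝ) = v - w t)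
    (hw : Tendsto w atTop (𝓝 0)) : ∃ C : ℤ, (C:ℝ) = v ∧ ∃ t, w t = 0 := by
  choose c hc using hint
  have hcv : Tendsto (fun t => (c t : ℝ)) atTop (𝓝 v) := by
    have : (fun t => (c t : ℝ)) = fun t => v - w t := funext hc
    rw [this]
    simpa using (tendsto_const_nhds.sub hw)
  have hcau : ∀ᶠ t in atTop, |(c t : ℝ) - v| < 1/2 := by
    have := Metric.tendsto_nhds.mp hcv (1/2) (by norm_num)
    simpa [Real.dist_eq] using this
  obtain ⟨T, hT⟩ := eventually_atTop.mp hcau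
  have hconst : ∀ t ≥ T, c t = c T := by
    intro t ht
    apply int_close
    have h1 := hT t ht
    have h2 := hT T le_rfl
    calc |(c t : ℝ) - c T| ≤ |(c t : ℝ) - v| + |(v : ℝ) - c T| := abs_sub_le _ _ _
      _ < 1/2 + 1/2 := by rw [abs_sub_comm v _]; exact add_lt_add h1 h2
      _ = 1 := by norm_num
  have hwc : Tendsto (fun t => w (t + T)) atTop (𝓝 0) := hw.comp (tendsto_add_atTop_nat T)
  have hwconst : ∀ t : ℕ, w (t + T) = v - c T := by
    intro t
    have := hc (t + T)
    rw [hconst (t + T) (Nat.le_add_left _ _)] at this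
    linarith
  have : Tendsto (fun _ : ℕ => v - (c T : ℝ)) atTop (𝓝 0) := by
    rw [← funext hwconst]; exact hwc
  have hv : v - (c T : ℝ) = 0 := tendsto_nhds_unique tendsto_const_nhds this
  exact ⟨c T, by linarith, ⟨T, by have h0 := hwconst 0; simp only [Nat.zero_add] at h0; linarith⟩⟩

/-- the cleanliness predicate: no translated discontinuity in `Ioc a b` -/
def Clean (D : Set ℝ) (a b : ℝ) : Prop := ∀ d ∈ D, ∀ p : ℤ, d + p ∉ Set.Ioc a b

/-- attraction of the left side of `d` to the orbit of `x` -/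
def Attr (F : ℝ → ℝ) (x d : ℝ) : Prop :=
  ∃ u : ℝ, Int.fract u = d ∧ ∃ h, 0 < h ∧ ∀ s, 0 < s → s < h →
    ∃ n : ℕ, Tendsto (fun j => F^[j] (u - s) - F^[j + n] x) atTop (𝓝 0)

variable {D : Set ℝ}

lemma clean_mono {a b a' b' : ℝ} (h : Clean D a b) (ha : a ≤ a') (hb : b' ≤ b) :
    Clean D a' b' := fun d hd p hp => h d hd p ⟨lt_of_le_of_lt ha hp.1, hp.2.trans hb⟩

lemma clean_union {a b c : ℝ} (hb : a ≤ b) (h1 : Clean D a b) (h2 : Clean D b c) :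
    Clean D a c := by
  intro d hd p hp
  rcases le_or_gt (d + p) b with h | h
  · exact h1 d hd p ⟨hp.1, h⟩
  · exact h2 d hd p ⟨h, hp.2⟩

lemma clean_translate {a b : ℝ} (q : ℤ) (h : Clean D a b) : Clean D (a + q) (b + q) := by
  intro d hd p hp
  refine h d hd (p - q) ⟨?_, ?_⟩ <;> push_cast <;> [linarith [hp.1]; linarith [hp.2]] 

section main

variable {lam : ℝ} (hlam0 : 0 < lam) (hlam1 : lam < 1)
  (hDsub : D ⊆ Set.Ico 0 1)
  {F : ℝ → ℝ} {m : ℤ} (hFper : ∀ x, F (x + 1) = F x + m)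
  (hFrc : ∀ x, ContinuousWithinAt F (Set.Ici x) x)
  (hFpiece : ∀ x y : ℝ, x < y → Clean D x y → F x < F y ∧ F y - F x ≤ lam * (y - x))
  {f : ℝ → ℝ} (hf : ∀ x, f x = Int.fract (F x))

include hFper in
lemma F_int (u : ℝ) (q : ℤ) : F (u + q) = F u + q * m := by
  have hdown : ∀ v : ℝ, F (v - 1) = F v - m := by
    intro v
    have := hFper (v - 1)
    simp only [sub_add_cancel] at this
    linarith
  induction q using Int.induction_on with
  | zero => simp
  | succ n ih =>
    have e : u + (((n:ℤ) + 1 : ℤ) : ℝ) = (u + ((n:ℤ) : ℝ)) + 1 := by push_cast; ring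
    rw [e, hFper, ih]; push_cast; ring
  | pred n ih =>
    have e : u + ((-(n:ℤ) - 1 : ℤ) : ℝ) = (u + ((-(n:ℤ) : ℤ) : ℝ)) - 1 := by push_cast; ring
    rw [e, hdown, ih]; push_cast; ring

include hFper in
lemma fract_F (u : ℝ) : Int.fract (F (Int.fract u)) = Int.fract (F u) := by
  have h1 : Int.fract u = u + (-⌊u⌋ : ℤ) := by
    rw [Int.fract]; push_cast; ring
  rw [h1, F_int hFper u (-⌊u⌋)]
  have : F u + (-⌊u⌋ : ℤ) * m = F u + ((-⌊u⌋ * m : ℤ) : ℝ) := by push_cast; ring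
  rw [this, Int.fract_add_intCast]

include hFper hf in
lemma iter_fract (n : ℕ) (u : ℝ) : f^[n] (Int.fract u) = Int.fract (F^[n] u) := by
  induction n generalizing u with
  | zero => simp [Int.fract_fract]
  | succ n ih =>
    rw [Function.iterate_succ_apply, Function.iterate_succ_apply]
    have h1 : f (Int.fract u) = Int.fract (F u) := by rw [hf, fract_F hFper]
    rw [h1, ih (F u)]

include hFper hf in
lemma iter_eq (n : ℕ) (u : ℝ) (hu : u ∈ Set.Ico (0:ℝ) 1) :
    f^[n] u = Int.fract (F^[n] u) := by
  rw [← iter_fract hFper hf n u, Int.fract_eq_self.mpr ⟨hu.1, hu.2⟩]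

include hDsub in
lemma next_clean (hDfin : D.Finite) (u : ℝ) : ∃ r, 0 < r ∧ r ≤ 1 ∧ Clean D u (u + r) := by
  classical
  set T : Set ℝ := {z | (∃ d ∈ D, ∃ p : ℤ, d + p = z) ∧ z ∈ Set.Ioc u (u+1)} with hTdef
  have hTsub : T ⊆ (fun d => d + ((⌊u - d⌋ + 1 : ℤ) : ℝ)) '' D := by
    rintro z ⟨⟨d, hd, p, rfl⟩, hzu⟩
    refine ⟨d, hd, ?_⟩
    have h1 : ⌊u - d⌋ < p := Int.floor_lt.mpr (by linarith [hzu.1])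
    have h2 : p - 1 ≤ ⌊u - d⌋ := Int.le_floor.mpr (by push_cast; linarith [hzu.2])
    have hp : p = ⌊u - d⌋ + 1 := by omega
    simp only []
    rw [hp]
  have hTfin : T.Finite := (hDfin.image _).subset hTsub
  rcases T.eq_empty_or_nonempty with hT | hT
  · refine ⟨1, one_pos, le_rfl, fun d hd p hp => ?_⟩
    exact absurd (show d + (p:ℝ) ∈ T from ⟨⟨d, hd, p, rfl⟩, hp⟩) (by rw [hT]; simp)
  · obtain ⟨t0, ht0mem, ht0min⟩ := hTfin.exists_minimalFor id T hT
    have ht0u : u < t0 := ht0mem.2.1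
    have ht0le : t0 ≤ u + 1 := ht0mem.2.2
    refine ⟨(t0 - u)/2, by linarith, by linarith, fun d hd p hp => ?_⟩
    have hz : d + (p:ℝ) ∈ T := ⟨⟨d, hd, p, rfl⟩, hp.1, by linarith [hp.2]⟩
    have hge : t0 ≤ d + p := by
      by_contra hlt
      push_neg at hlt
      exact absurd (ht0min hz (le_of_lt hlt)) (not_le.mpr hlt)
    linarith [hp.2]

include hFpiece in
lemma mono3 {a b c : ℝ} (hab : a < b) (hbc : b ≤ c) (hcl : Clean D a c) :
    F a < F b ∧ F b ≤ F c := by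
  refine ⟨(hFpiece a b hab (clean_mono hcl le_rfl hbc)).1, ?_⟩
  rcases eq_or_lt_of_le hbc with rfl | hlt
  · exact le_rfl
  · exact le_of_lt (hFpiece b c hlt (clean_mono hcl (le_of_lt hab) le_rfl)).1

include hlam0 hFpiece in
lemma iter_bound : ∀ n (a b : ℝ), a < b → (∀ j, j < n → Clean D (F^[j] a) (F^[j] b)) →
    F^[n] a < F^[n] b ∧ F^[n] b - F^[n] a ≤ lam ^ n * (b - a) := by
  intro n
  induction n with
  | zero => intro a b hab _; exact ⟨hab, by simp⟩
  | succ n ih =>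
    intro a b hab hcl
    have h1 := ih a b hab (fun j hj => hcl j (Nat.lt_succ_of_lt hj))
    have h2 := hFpiece (F^[n] a) (F^[n] b) h1.1 (hcl n (Nat.lt_succ_self n))
    rw [Function.iterate_succ_apply', Function.iterate_succ_apply']
    refine ⟨h2.1, ?_⟩
    calc F (F^[n] b) - F (F^[n] a) ≤ lam * (F^[n] b - F^[n] a) := h2.2
      _ ≤ lam * (lam ^ n * (b - a)) := by
          exact mul_le_mul_of_nonneg_left h1.2 (le_of_lt hlam0)
      _ = lam ^ (n+1) * (b - a) := by ring

include hFpiece in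
lemma iter_mono : ∀ n (a b c : ℝ), a < b → b ≤ c →
    (∀ j, j < n → Clean D (F^[j] a) (F^[j] c)) →
    F^[n] a < F^[n] b ∧ F^[n] b ≤ F^[n] c := by
  intro n
  induction n with
  | zero => intro a b c hab hbc _; simpa using ⟨hab, hbc⟩
  | succ n ih =>
    intro a b c hab hbc hcl
    have h1 := ih a b c hab hbc (fun j hj => hcl j (Nat.lt_succ_of_lt hj))
    have h2 := mono3 hFpiece h1.1 h1.2 (hcl n (Nat.lt_succ_self n))
    rw [Function.iterate_succ_apply', Function.iterate_succ_apply', Function.iterate_succ_apply']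
    exact h2

include hDsub hFrc hFpiece in
lemma rc_iter (hDfin : D.Finite) : ∀ (n : ℕ) (u : ℝ),
    Tendsto F^[n] (𝓝[>] u) (𝓝[>] (F^[n] u)) := by
  have base : ∀ u : ℝ, Tendsto F (𝓝[>] u) (𝓝[>] (F u)) := by
    intro u
    rw [tendsto_nhdsWithin_iff]
    constructor
    · exact (hFrc u).mono_left (nhdsWithin_mono u Set.Ioi_subset_Ici_self)
    · obtain ⟨r, hr0, _, hrc⟩ := next_clean hDsub hDfin u
      filter_upwards [Ioo_mem_nhdsGT_of_mem (show u ∈ Set.Ico u (u+r) from ⟨le_rfl, by linarith⟩)] with v hv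
      exact (hFpiece u v hv.1 (clean_mono hrc le_rfl (le_of_lt hv.2))).1
  intro n
  induction n with
  | zero => intro u; simpa using tendsto_id'.mpr le_rfl
  | succ n ih =>
    intro u
    have : Tendsto (fun v => F^[n] (F v)) (𝓝[>] u) (𝓝[>] (F^[n] (F u))) :=
      (ih (F u)).comp (base u)
    rw [Function.iterate_succ]; exact this

include hFper hf in
lemma per_mult (x : ℝ) {p : ℕ} (hxp : f^[p] x = x) (t : ℕ) : f^[t * p] x = x := by
  induction t with
  | zero => simp
  | succ t ih => rw [Nat.succ_mul, Function.iterate_add_apply, hxp, ih]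

include hlam0 hlam1 hDsub hFper hFrc hFpiece hf in
lemma dichotomy (hDfin : D.Finite) (x : ℝ) (hx : x ∈ Set.Ico (0:ℝ) 1)
    (p : ℕ) (hp : 1 ≤ p) (hxp : f^[p] x = x) :
    (∀ y ∈ Set.Ico (0:ℝ) 1, (∃ q, 1 ≤ q ∧ f^[q] y = y) → y = x) ∨ (∃ d ∈ D, Attr F x d) := by
  classical
  -- uniform clean radius along the orbit
  obtain ⟨ρ, hρ0, hρ1, hρc⟩ : ∃ ρ, 0 < ρ ∧ ρ ≤ 1 ∧ ∀ n, Clean D (F^[n] x) (F^[n] x + ρ) := by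
    choose r hr0 hr1 hrc using next_clean hDsub hDfin
    obtain ⟨j0, hj0, hj0min⟩ := Finset.exists_min_image (Finset.range p)
      (fun j => r (F^[j] x)) ⟨0, Finset.mem_range.mpr hp⟩
    refine ⟨r (F^[j0] x), hr0 _, hr1 _, fun n => ?_⟩
    have hmodit : f^[n] x = f^[n % p] x := by
      conv_lhs => rw [← Nat.mod_add_div' n p]
      rw [Function.iterate_add_apply, per_mult hFper hf x hxp]
    have hmod : Int.fract (F^[n] x) = Int.fract (F^[n % p] x) := by
      rw [← iter_eq hFper hf n x hx, ← iter_eq hFper hf (n % p) x hx, hmodit]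
    obtain ⟨z, hz⟩ := Int.fract_eq_fract.mp hmod
    have htr := clean_translate z (hrc (F^[n % p] x))
    have he : F^[n] x = F^[n % p] x + z := by linarith
    have hle : r (F^[j0] x) ≤ r (F^[n % p] x) :=
      hj0min (n % p) (Finset.mem_range.mpr (Nat.mod_lt n hp))
    rw [← he] at htr
    exact clean_mono htr le_rfl (by linarith)
  -- the set of good right-gaps
  set G : Set ℝ := {ε | 0 < ε ∧ ε < 1 ∧ ∀ n, Clean D (F^[n] x) (F^[n] (x + ε))} with hGdef
  have hsmall : ∀ ε, 0 < ε → ε < ρ → ∀ n, Clean D (F^[n] x) (F^[n] (x + ε)) := by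
    intro ε hε0 hερ n
    induction n using Nat.strong_induction_on with
    | _ n ih =>
      have hb := iter_bound hlam0 hFpiece n x (x+ε) (by linarith) (fun j hj => ih j hj)
      have hl1 : lam ^ n ≤ 1 := pow_le_one₀ (le_of_lt hlam0) (le_of_lt hlam1)
      have hgapb : F^[n] (x+ε) - F^[n] x ≤ ε := le_trans hb.2 (by nlinarith)
      exact clean_mono (hρc n) le_rfl (by linarith)
  have hGne : ρ/2 ∈ G := ⟨by linarith, by linarith, hsmall (ρ/2) (by linarith) (by linarith)⟩
  have hGbdd : BddAbove G := ⟨1, fun ε hε => le_of_lt hε.2.1⟩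
  have hgap : ∀ n, ∀ ε ∈ G, F^[n] x < F^[n] (x+ε) ∧ F^[n] (x+ε) - F^[n] x ≤ lam ^ n * ε := by
    intro n ε hε
    have := iter_bound hlam0 hFpiece n x (x+ε) (by linarith [hε.1]) (fun j _ => hε.2.2 j)
    rwa [add_sub_cancel_left] at this
  have hGdown : ∀ ε ∈ G, ∀ ε', 0 < ε' → ε' ≤ ε → ε' ∈ G := by
    intro ε hε ε' hε'0 hε'ε
    rcases eq_or_lt_of_le hε'ε with rfl | hlt
    · exact hε
    · refine ⟨hε'0, lt_trans hlt hε.2.1, fun n => ?_⟩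
      have := iter_mono hFpiece n x (x+ε') (x+ε) (by linarith) (by linarith)
        (fun j _ => hε.2.2 j)
      exact clean_mono (hε.2.2 n) le_rfl this.2
  set σ : ℝ := sSup G with hσdef
  have hσ0 : 0 < σ := lt_of_lt_of_le (by linarith) (le_csSup hGbdd hGne)
  have hσ1 : σ ≤ 1 := csSup_le ⟨_, hGne⟩ (fun ε hε => le_of_lt hε.2.1)
  have hGlt : ∀ ε, 0 < ε → ε < σ → ε ∈ G := by
    intro ε hε0 hεσ
    obtain ⟨ε'', hε''G, hlt⟩ := exists_lt_of_lt_csSup ⟨_, hGne⟩ hεσ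
    exact hGdown ε'' hε''G ε hε0 (le_of_lt hlt)
  rcases eq_or_lt_of_le hσ1 with hσeq | hσlt1
  · -- CASE A : the whole circle is attracted; x is the unique periodic point
    left
    intro y hy ⟨q, hq1, hyq⟩
    by_contra hne
    have hεex : ∃ ε, 0 < ε ∧ ε < 1 ∧ Int.fract (x + ε) = y := by
      rcases lt_or_gt_of_ne hne with hlt | hgt
      · refine ⟨y + 1 - x, by linarith [hy.1, hx.2], by linarith, ?_⟩
        have e : x + (y + 1 - x) = y + ((1:ℤ):ℝ) := by push_cast; ring
        rw [e, Int.fract_add_intCast, Int.fract_eq_self.mpr ⟨hy.1, hy.2⟩]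
      · refine ⟨y - x, by linarith, by linarith [hy.2, hx.1], ?_⟩
        have e : x + (y - x) = y := by ring
        rw [e, Int.fract_eq_self.mpr ⟨hy.1, hy.2⟩]
    obtain ⟨ε, hε0, hε1, hεy⟩ := hεex
    have hεG : ε ∈ G := hGlt ε hε0 (by rw [← hσeq] at hε1; exact hε1)
    set P : ℕ := p * q with hPdef
    have hint : ∀ t : ℕ, ∃ c : ℤ, (c:ℝ) = (y - x) - (F^[t*P] (x+ε) - F^[t*P] x) := by
      intro t
      have hxt : f^[t*P] x = x := by
        have : t * P = (t * q) * p := by rw [hPdef]; ring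
        rw [this]; exact per_mult hFper hf x hxp _
      have hyt : f^[t*P] y = y := by
        have : t * P = (t * p) * q := by rw [hPdef]; ring
        rw [this]; exact per_mult hFper hf y hyq _
      have hA : x = Int.fract (F^[t*P] x) := by rw [← iter_eq hFper hf _ x hx, hxt]
      have hB : y = Int.fract (F^[t*P] (x+ε)) := by
        calc y = f^[t*P] y := hyt.symm
          _ = f^[t*P] (Int.fract (x+ε)) := by rw [hεy]
          _ = Int.fract (F^[t*P] (x+ε)) := iter_fract hFper hf _ _
      refine ⟨⌊F^[t*P] x⌋ - ⌊F^[t*P] (x+ε)⌋, ?_⟩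
      have hA' : x = F^[t*P] x - ⌊F^[t*P] x⌋ := by rw [Int.fract] at hA; exact hA
      have hB' : y = F^[t*P] (x+ε) - ⌊F^[t*P] (x+ε)⌋ := by rw [Int.fract] at hB; exact hB
      push_cast
      linarith
    have hP1 : 1 ≤ P := Nat.one_le_iff_ne_zero.mpr (by positivity)
    have hlamP : lam ^ P < 1 := pow_lt_one₀ (le_of_lt hlam0) hlam1 (by omega)
    have hw : Tendsto (fun t => F^[t*P] (x+ε) - F^[t*P] x) atTop (𝓝 0) := by
      apply squeeze_zero (fun t => le_of_lt (sub_pos.mpr (hgap (t*P) ε hεG).1))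
        (fun t => le_trans (hgap (t*P) ε hεG).2 ?_)
      · have := (tendsto_pow_atTop_nhds_zero_of_lt_one (by positivity : (0:ℝ) ≤ lam ^ P) hlamP).mul_const ε
        simpa using this
      · have : lam ^ (t*P) = (lam ^ P) ^ t := by rw [← pow_mul, mul_comm]
        rw [this]
    obtain ⟨C, hC, t, hwt⟩ := intlim _ _ hint hw
    have := (hgap (t*P) ε hεG).1
    linarith
  · -- CASE B : a discontinuity is assigned to the orbit of x
    right
    set gap : ℕ → ℝ → ℝ := fun n ε => F^[n] (x + ε) - F^[n] x with hgapdef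
    set HS : ℕ → Set ℝ := fun n => gap n '' G with hHSdef
    set h : ℕ → ℝ := fun n => sSup (HS n) with hhdef
    have hHne : ∀ n, (HS n).Nonempty := fun n => ⟨_, ⟨ρ/2, hGne, rfl⟩⟩
    have hεleσ : ∀ ε ∈ G, ε ≤ σ := fun ε hε => le_csSup hGbdd hε
    have hHbdd : ∀ n, BddAbove (HS n) := by
      intro n
      refine ⟨lam ^ n * σ, ?_⟩
      rintro g ⟨ε, hεG, rfl⟩
      exact le_trans (hgap n ε hεG).2
        (mul_le_mul_of_nonneg_left (hεleσ ε hεG) (by positivity))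
    have hhub : ∀ n, h n ≤ lam ^ n * σ := by
      intro n
      refine csSup_le (hHne n) ?_
      rintro g ⟨ε, hεG, rfl⟩
      exact le_trans (hgap n ε hεG).2
        (mul_le_mul_of_nonneg_left (hεleσ ε hεG) (by positivity))
    have hh0 : ∀ n, 0 < h n := fun n =>
      lt_of_lt_of_le (sub_pos.mpr (hgap n (ρ/2) hGne).1) (le_csSup (hHbdd n) ⟨ρ/2, hGne, rfl⟩)
    have hlamn1 : ∀ n : ℕ, lam ^ n ≤ 1 := fun n => pow_le_one₀ (le_of_lt hlam0) (le_of_lt hlam1)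
    have hh1 : ∀ n, h n < 1 := fun n => lt_of_le_of_lt (hhub n)
      (lt_of_le_of_lt (by nlinarith [hlamn1 n, hσ0]) hσlt1)
    -- open part below h n is clean
    have hopen : ∀ n, ∀ y, F^[n] x < y → y < F^[n] x + h n → ∀ d ∈ D, ∀ q : ℤ, d + q ≠ y := by
      intro n y hy1 hy2 d hd q hdq
      obtain ⟨g, ⟨ε, hεG, rfl⟩, hlt⟩ := exists_lt_of_lt_csSup (hHne n)
        (show y - F^[n] x < h n by linarith)
      exact hεG.2.2 n d hd q (by rw [hdq]; exact ⟨hy1, by simp only [hgapdef] at hlt; linarith⟩)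
    by_cases hDhit : ∃ n, ∃ d ∈ D, ∃ q : ℤ, d + q = F^[n] x + h n
    · -- construct the attracted discontinuity
      obtain ⟨n, d, hd, q, hq⟩ := hDhit
      refine ⟨d, hd, F^[n] x + h n, ?_, h n, hh0 n, ?_⟩
      · rw [← hq, Int.fract_add_intCast, Int.fract_eq_self.mpr ⟨(hDsub hd).1, (hDsub hd).2⟩]
      · intro s hs0 hsh
        refine ⟨n, ?_⟩
        obtain ⟨g, ⟨ε, hεG, rfl⟩, hgt⟩ := exists_lt_of_lt_csSup (hHne n)
          (show h n - s < h n by linarith)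
        simp only [hgapdef] at hgt
        have hcomp : ∀ i : ℕ, F^[i + n] x < F^[i] (F^[n] x + h n - s) ∧
            F^[i] (F^[n] x + h n - s) ≤ F^[i + n] (x + ε) := by
          intro i
          induction i with
          | zero =>
            simp only [Nat.zero_add, Function.iterate_zero_apply]
            exact ⟨by linarith, by linarith⟩
          | succ i ih =>
            have hcl : Clean D (F^[i + n] x) (F^[i + n] (x + ε)) := hεG.2.2 (i + n)
            have h3 := mono3 hFpiece ih.1 ih.2 hcl
            rw [show i + 1 + n = (i + n) + 1 by ring, Function.iterate_succ_apply',
                Function.iterate_succ_apply', Function.iterate_succ_apply']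
            exact h3
        apply squeeze_zero (g := fun j => lam ^ j)
          (fun j => le_of_lt (sub_pos.mpr (hcomp j).1)) ?_ ?_
        · intro j
          have h1 := (hcomp j).2
          have h2 := (hgap (j + n) ε hεG).2
          have h3 : lam ^ (j + n) * ε ≤ lam ^ j := by
            have he : lam ^ (j + n) = lam ^ j * lam ^ n := pow_add lam j n
            have h4 : lam ^ n * ε ≤ 1 := by nlinarith [hlamn1 n, hεG.1, hεG.2.1, pow_pos hlam0 n]
            calc lam ^ (j+n) * ε = lam ^ j * (lam ^ n * ε) := by rw [he]; ring
              _ ≤ lam ^ j * 1 := mul_le_mul_of_nonneg_left h4 (le_of_lt (pow_pos hlam0 j))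
              _ = lam ^ j := mul_one _
          linarith
        · exact tendsto_pow_atTop_nhds_zero_of_lt_one (le_of_lt hlam0) hlam1
    · -- impossible: σ could then be extended
      exfalso
      push_neg at hDhit
      have hcleanfull : ∀ n, Clean D (F^[n] x) (F^[n] x + h n) := by
        intro n d hd q hmem
        rcases eq_or_lt_of_le hmem.2 with heq | hlt
        · exact hDhit n d hd q heq
        · exact hopen n (d + q) hmem.1 hlt d hd q rfl
      have hgapleh : ∀ n, ∀ ε ∈ G, F^[n] (x+ε) ≤ F^[n] x + h n := by
        intro n ε hεG
        have : F^[n] (x+ε) - F^[n] x ≤ h n := le_csSup (hHbdd n) ⟨ε, hεG, rfl⟩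
        linarith
      have hup : ∀ n, h (n+1) = F (F^[n] x + h n) - F^[n+1] x := by
        intro n
        have hub : h (n+1) ≤ F (F^[n] x + h n) - F^[n+1] x := by
          refine csSup_le (hHne (n+1)) ?_
          rintro g ⟨ε, hεG, rfl⟩
          simp only [hgapdef]
          have h3 := mono3 hFpiece (hgap n ε hεG).1 (hgapleh n ε hεG) (hcleanfull n)
          rw [Function.iterate_succ_apply', Function.iterate_succ_apply']
          linarith [h3.2]
        have hlb : F (F^[n] x + h n) - F^[n+1] x ≤ h (n+1) := by
          by_contra hcon
          push_neg at hcon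
          set δ : ℝ := F (F^[n] x + h n) - F^[n+1] x - h (n+1) with hδdef
          have hδ0 : 0 < δ := by simp only [hδdef]; linarith
          have hdl : 0 < δ / lam := div_pos hδ0 hlam0
          obtain ⟨g, ⟨ε, hεG, rfl⟩, hgt⟩ := exists_lt_of_lt_csSup (hHne n)
            (show h n - δ/lam < h n by linarith)
          simp only [hgapdef] at hgt
          have hle2 : F^[n] (x+ε) ≤ F^[n] x + h n := hgapleh n ε hεG
          have key : F (F^[n] x + h n) - F (F^[n] (x+ε)) ≤
              lam * (h n - (F^[n] (x+ε) - F^[n] x)) := by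
            rcases eq_or_lt_of_le hle2 with heq | hlt2
            · rw [heq]
              have he2 : F^[n] x + h n - F^[n] x = h n := by ring
              simp [he2]
            · have hc := hFpiece (F^[n] (x+ε)) (F^[n] x + h n) hlt2
                (clean_mono (hcleanfull n) (le_of_lt (hgap n ε hεG).1) le_rfl)
              have he2 : F^[n] x + h n - F^[n] (x+ε) = h n - (F^[n] (x+ε) - F^[n] x) := by ring
              rw [← he2]
              exact hc.2
          have hmem2 : F^[n+1] (x+ε) - F^[n+1] x ≤ h (n+1) := le_csSup (hHbdd (n+1)) ⟨ε, hεG, rfl⟩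
          have hstep : F^[n+1] (x+ε) = F (F^[n] (x+ε)) := Function.iterate_succ_apply' F n (x+ε)
          have hfin : lam * (h n - (F^[n] (x+ε) - F^[n] x)) < δ := by
            have hlt3 : h n - (F^[n] (x+ε) - F^[n] x) < δ / lam := by linarith
            calc lam * (h n - (F^[n] (x+ε) - F^[n] x)) < lam * (δ/lam) :=
                  mul_lt_mul_of_pos_left hlt3 hlam0
              _ = δ := by field_simp
          linarith
        exact (le_antisymm hub hlb).symm ▸ rfl
      have hσit : ∀ n, F^[n] (x + σ) = F^[n] x + h n := by
        intro n
        induction n with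
        | zero =>
          simp only [Function.iterate_zero_apply]
          have hgap0 : gap 0 = fun ε => ε := by
            funext ε; simp [hgapdef]
          have hHS0 : HS 0 = G := by
            show gap 0 '' G = G
            rw [hgap0, Set.image_id']
          have h0 : h 0 = σ := by
            show sSup (HS 0) = σ
            rw [hHS0]
          rw [h0]
        | succ n ih =>
          rw [Function.iterate_succ_apply', ih]
          linarith [hup n]
      have hσG : σ ∈ G := ⟨hσ0, hσlt1, fun n => by rw [hσit n]; exact hcleanfull n⟩
      obtain ⟨N, hN⟩ := exists_pow_lt_of_lt_one hρ0 hlam1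
      choose r'' hr''0 hr''1 hr''c using next_clean hDsub hDfin
      have hδex : ∀ NN : ℕ, ∃ δ, 0 < δ ∧ ∀ n, n < NN → ∀ δ', 0 < δ' → δ' ≤ δ →
          F^[n] (x + σ + δ') < F^[n] (x + σ) + r'' (F^[n] (x + σ)) := by
        intro NN
        induction NN with
        | zero => exact ⟨1, one_pos, fun n hn => absurd hn (Nat.not_lt_zero n)⟩
        | succ NN ih =>
          obtain ⟨δ1, hδ1, hih⟩ := ih
          have htd := rc_iter hDsub hFrc hFpiece hDfin NN (x + σ)
          have hIio : Set.Iio (F^[NN] (x + σ) + r'' (F^[NN] (x + σ))) ∈ 𝓝[>] (F^[NN] (x+σ)) :=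
            nhdsWithin_le_nhds (Iio_mem_nhds (by linarith [hr''0 (F^[NN] (x+σ))]))
          have hpre : F^[NN] ⁻¹' Set.Iio (F^[NN] (x + σ) + r'' (F^[NN] (x + σ))) ∈
              𝓝[>] (x + σ) := htd hIio
          rw [mem_nhdsGT_iff_exists_Ioo_subset] at hpre
          obtain ⟨u', hu', hsub⟩ := hpre
          simp only [Set.mem_Ioi] at hu'
          refine ⟨min δ1 ((u' - (x + σ))/2), lt_min hδ1 (by linarith), ?_⟩
          intro n hn δ' hδ'0 hδ'le
          rcases Nat.lt_or_ge n NN with h' | h'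
          · exact hih n h' δ' hδ'0 (le_trans hδ'le (min_le_left _ _))
          · have hnN : n = NN := by omega
            subst hnN
            have hmem3 : x + σ + δ' ∈ Set.Ioo (x + σ) u' := by
              have := le_trans hδ'le (min_le_right _ _)
              exact ⟨by linarith, by linarith⟩
            exact Set.mem_Iio.mp (hsub hmem3)
      obtain ⟨δ1, hδ10, hδ1p⟩ := hδex N
      set εs : ℝ := σ + min δ1 ((1 - σ)/2) with hεsdef
      have hδpos : 0 < min δ1 ((1 - σ)/2) := lt_min hδ10 (by linarith)
      have hεs0 : 0 < εs := add_pos hσ0 hδpos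
      have hεs1 : εs < 1 := by
        have := min_le_right δ1 ((1 - σ)/2)
        simp only [hεsdef]; linarith
      have hεsG : εs ∈ G := by
        refine ⟨hεs0, hεs1, ?_⟩
        intro n
        induction n using Nat.strong_induction_on with
        | _ n ih =>
          rcases Nat.lt_or_ge n N with hn | hn
          · have hlt : F^[n] (x + εs) < F^[n] (x + σ) + r'' (F^[n] (x+σ)) := by
              rw [hεsdef, ← add_assoc]
              exact hδ1p n hn _ hδpos (min_le_left _ _)
            rw [hσit n] at hlt
            have hcl2 := clean_union (by linarith [hh0 n]) (hcleanfull n)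
              (hr''c (F^[n] x + h n))
            exact clean_mono hcl2 le_rfl (le_of_lt hlt)
          · have hb := iter_bound hlam0 hFpiece n x (x + εs) (by linarith [hεs0]) (fun j hj => ih j hj)
            have h1 : lam ^ n ≤ lam ^ N := pow_le_pow_of_le_one (le_of_lt hlam0) (le_of_lt hlam1) hn
            have h2 : F^[n] (x + εs) - F^[n] x ≤ lam ^ n * εs := by
              have := hb.2; rwa [add_sub_cancel_left] at this
            have h3 : lam ^ n * εs < ρ := by nlinarith [pow_pos hlam0 n, hεs0, hεs1, h1, hN]
            exact clean_mono (hρc n) le_rfl (by linarith)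
      have := hεleσ εs hεsG
      simp only [hεsdef] at this
      linarith

include hFper in
lemma iter_int (j : ℕ) : ∀ (u : ℝ) (c : ℤ), ∃ e : ℤ, F^[j] (u + c) = F^[j] u + e := by
  induction j with
  | zero => exact fun u c => ⟨c, by simp⟩
  | succ j ih =>
    intro u c
    rw [Function.iterate_succ_apply, Function.iterate_succ_apply]
    obtain ⟨e, he⟩ := ih (F u) (c * m)
    refine ⟨e, ?_⟩
    rw [F_int hFper u c]
    have hc : (c : ℝ) * m = ((c * m : ℤ) : ℝ) := by push_cast; ring
    rw [hc, he]

include hFper hf in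
lemma orb_sub (x y : ℝ) (p1 i j : ℕ) (hp1 : 1 ≤ p1)
    (hxp : f^[p1] x = x) (hij : f^[i] x = f^[j] y) :
    Set.range (fun n => f^[n] x) ⊆ Set.range (fun n => f^[n] y) := by
  rintro z ⟨a, rfl⟩
  refine ⟨a + i * p1 - i + j, ?_⟩
  simp only
  have e2 : a + i * p1 - i + i = a + i * p1 := by
    have : i ≤ i * p1 := Nat.le_mul_of_pos_right i hp1
    omega
  rw [Function.iterate_add_apply, ← hij, ← Function.iterate_add_apply, e2,
    Function.iterate_add_apply, per_mult hFper hf x hxp]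

include hFper hf in
lemma iter_mem (n : ℕ) (x : ℝ) (hx : x ∈ Set.Ico (0:ℝ) 1) : f^[n] x ∈ Set.Ico (0:ℝ) 1 := by
  rw [iter_eq hFper hf n x hx]
  exact ⟨Int.fract_nonneg _, Int.fract_lt_one _⟩

include hFper hf in
lemma attr_inj (x y d : ℝ) (hxI : x ∈ Set.Ico (0:ℝ) 1) (hyI : y ∈ Set.Ico (0:ℝ) 1)
    {p1 p2 : ℕ} (hp1 : 1 ≤ p1) (hp2 : 1 ≤ p2) (hxp : f^[p1] x = x) (hyp : f^[p2] y = y)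
    (hax : Attr F x d) (hay : Attr F y d) :
    Set.range (fun n => f^[n] x) = Set.range (fun n => f^[n] y) := by
  obtain ⟨u1, hu1, h1, hh1, hA1⟩ := hax
  obtain ⟨u2, hu2, h2, hh2, hA2⟩ := hay
  obtain ⟨c, hc⟩ := Int.fract_eq_fract.mp (hu1.trans hu2.symm)
  set s : ℝ := min h1 h2 / 2 with hsdef
  have hmin0 : 0 < min h1 h2 := lt_min hh1 hh2
  have hs0 : 0 < s := by simp only [hsdef]; linarith
  have hs1 : s < h1 := by
    have := min_le_left h1 h2
    simp only [hsdef]; linarith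
  have hs2 : s < h2 := by
    have := min_le_right h1 h2
    simp only [hsdef]; linarith
  obtain ⟨n1, hT1⟩ := hA1 s hs0 hs1
  obtain ⟨n2, hT2⟩ := hA2 s hs0 hs2
  have hu12 : u1 - s = (u2 - s) + c := by linarith
  set P : ℕ := p1 * p2 with hPdef
  have hP0 : 0 < P := by positivity
  have hmul : Tendsto (fun t : ℕ => t * P) atTop atTop :=
    tendsto_atTop_atTop.mpr (fun b => ⟨b, fun a ha => le_trans ha (Nat.le_mul_of_pos_right a hP0)⟩)
  have hw : Tendsto (fun t : ℕ =>
      (F^[t*P] (u2 - s) - F^[t*P + n2] y) - (F^[t*P] (u1 - s) - F^[t*P + n1] x)) atTop (𝓝 0) := by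
    have c1 : Tendsto (fun t : ℕ => F^[t*P] (u1 - s) - F^[t*P + n1] x) atTop (𝓝 0) :=
      hT1.comp hmul
    have c2 : Tendsto (fun t : ℕ => F^[t*P] (u2 - s) - F^[t*P + n2] y) atTop (𝓝 0) :=
      hT2.comp hmul
    simpa using c2.sub c1
  have hint : ∀ t : ℕ, ∃ cc : ℤ, (cc : ℝ) = (f^[n1] x - f^[n2] y) -
      ((F^[t*P] (u2 - s) - F^[t*P + n2] y) - (F^[t*P] (u1 - s) - F^[t*P + n1] x)) := by
    intro t
    have hxt : f^[t*P] x = x := by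
      have e : t * P = (t * p2) * p1 := by rw [hPdef]; ring
      rw [e]; exact per_mult hFper hf x hxp _
    have hyt : f^[t*P] y = y := by
      have e : t * P = (t * p1) * p2 := by rw [hPdef]; ring
      rw [e]; exact per_mult hFper hf y hyp _
    have hA : f^[n1] x = Int.fract (F^[t*P + n1] x) := by
      rw [← iter_eq hFper hf _ x hxI]
      rw [show t*P + n1 = n1 + t*P by ring, Function.iterate_add_apply, hxt]
    have hB : f^[n2] y = Int.fract (F^[t*P + n2] y) := by
      rw [← iter_eq hFper hf _ y hyI]
      rw [show t*P + n2 = n2 + t*P by ring, Function.iterate_add_apply, hyt]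
    obtain ⟨e, he⟩ := iter_int hFper (t*P) (u2 - s) c
    rw [← hu12] at he
    refine ⟨e - ⌊F^[t*P + n1] x⌋ + ⌊F^[t*P + n2] y⌋, ?_⟩
    have hA' : f^[n1] x = F^[t*P + n1] x - ⌊F^[t*P + n1] x⌋ := by rw [Int.fract] at hA; exact hA
    have hB' : f^[n2] y = F^[t*P + n2] y - ⌊F^[t*P + n2] y⌋ := by rw [Int.fract] at hB; exact hB
    push_cast
    linarith
  obtain ⟨C, hC, t0, hw0⟩ := intlim _ _ hint hw
  have hx1 : f^[n1] x ∈ Set.Ico (0:ℝ) 1 := iter_mem hFper hf n1 x hxI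
  have hy1 : f^[n2] y ∈ Set.Ico (0:ℝ) 1 := iter_mem hFper hf n2 y hyI
  have hC0 : C = 0 := by
    have hlb : (-1 : ℝ) < C := by rw [hC]; linarith [hx1.1, hy1.2]
    have hub : (C : ℝ) < 1 := by rw [hC]; linarith [hx1.2, hy1.1]
    have hlb' : (-1 : ℤ) < C := by exact_mod_cast hlb
    have hub' : C < (1 : ℤ) := by exact_mod_cast hub
    omega
  have hveq : f^[n1] x = f^[n2] y := by
    rw [hC0] at hC
    simp at hC
    linarith
  exact Set.Subset.antisymm
    (orb_sub hFper hf x y p1 n1 n2 hp1 hxp hveq)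
    (orb_sub hFper hf y x p2 n2 n1 hp2 hyp hveq.symm)

end main
end Stmt5


/-- An orientation-preserving piecewise contraction of the circle ℝ/ℤ with
`k` discontinuity points (right continuous at them) has at most `k` periodic orbits.
The circle map is encoded by a lift `F : ℝ → ℝ` with `F (x+1) = F x + m` for a fixed
integer `m`, right continuous, strictly increasing and `λ`-Lipschitz on each connected
component of `ℝ \ (D + ℤ)` where `D ⊆ [0,1)` is the set of discontinuity points on the
circle; the circle map, identified with a map of `[0,1)`, is `f = Int.fract ∘ F`. -/
theorem stmt_5 (k : ℕ) (lam : ℝ) (hlam0 : 0 < lam) (hlam1 : lam < 1)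
    (D : Set ℝ) (hDfin : D.Finite) (hDsub : D ⊆ Set.Ico 0 1) (hDcard : D.ncard = k)
    (F : ℝ → ℝ) (m : ℤ) (hFper : ∀ x, F (x + 1) = F x + m)
    (hFrc : ∀ x, ContinuousWithinAt F (Set.Ici x) x)
    (hFpiece : ∀ x y : ℝ, x < y → (∀ d ∈ D, ∀ p : ℤ, d + p ∉ Set.Ioc x y) →
      F x < F y ∧ F y - F x ≤ lam * (y - x))
    (f : ℝ → ℝ) (hf : ∀ x, f x = Int.fract (F x)) :
    {O : Set ℝ | ∃ x, x ∈ Set.Ico (0:ℝ) 1 ∧ (∃ p, 1 ≤ p ∧ f^[p] x = x) ∧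
        O = Set.range fun n => f^[n] x}.Finite ∧
    {O : Set ℝ | ∃ x, x ∈ Set.Ico (0:ℝ) 1 ∧ (∃ p, 1 ≤ p ∧ f^[p] x = x) ∧
        O = Set.range fun n => f^[n] x}.ncard ≤ k := by
  classical
  have hFpiece' : ∀ x y : ℝ, x < y → Stmt5.Clean D x y →
      F x < F y ∧ F y - F x ≤ lam * (y - x) := hFpiece
  have hDne : D.Nonempty := by
    rcases Set.eq_empty_or_nonempty D with hD | hD
    · exfalso
      have hcl : Stmt5.Clean D 0 1 := by
        intro d hd
        rw [hD] at hd
        exact absurd hd (Set.notMem_empty d)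
      have h01 := hFpiece' 0 1 one_pos hcl
      have hm : F (0 + 1) = F 0 + m := hFper 0
      rw [show (0:ℝ)+1 = 1 by ring] at hm
      have h1 : (0:ℝ) < m := by rw [hm] at h01; linarith [h01.1]
      have h2 : (m:ℝ) < 1 := by rw [hm] at h01; linarith [h01.2, hlam1]
      have h1' : (0:ℤ) < m := by exact_mod_cast h1
      have h2' : m < (1:ℤ) := by exact_mod_cast h2
      omega
    · exact hD
  have hk1 : 1 ≤ k := by
    rw [← hDcard]
    exact (Set.ncard_pos hDfin).mpr hDne
  by_cases hcaseA : ∃ x ∈ Set.Ico (0:ℝ) 1, (∃ p, 1 ≤ p ∧ f^[p] x = x) ∧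
      ∀ y ∈ Set.Ico (0:ℝ) 1, (∃ q, 1 ≤ q ∧ f^[q] y = y) → y = x
  · obtain ⟨x, hxI, ⟨p, hp, hxp⟩, huniq⟩ := hcaseA
    have hsub : {O : Set ℝ | ∃ x, x ∈ Set.Ico (0:ℝ) 1 ∧ (∃ p, 1 ≤ p ∧ f^[p] x = x) ∧
        O = Set.range fun n => f^[n] x} ⊆ {Set.range fun n => f^[n] x} := by
      rintro O ⟨y, hyI, ⟨q, hq, hyq⟩, rfl⟩
      have hyx := huniq y hyI ⟨q, hq, hyq⟩
      rw [hyx]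
      exact Set.mem_singleton _
    refine ⟨Set.Finite.subset (Set.finite_singleton _) hsub, ?_⟩
    calc _ ≤ ({Set.range fun n => f^[n] x} : Set (Set ℝ)).ncard :=
          Set.ncard_le_ncard hsub (Set.finite_singleton _)
      _ = 1 := Set.ncard_singleton _
      _ ≤ k := hk1
  · push_neg at hcaseA
    have hsel : ∀ O ∈ {O : Set ℝ | ∃ x, x ∈ Set.Ico (0:ℝ) 1 ∧ (∃ p, 1 ≤ p ∧ f^[p] x = x) ∧
        O = Set.range fun n => f^[n] x}, ∃ d ∈ D, ∃ x, x ∈ Set.Ico (0:ℝ) 1 ∧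
        (∃ p, 1 ≤ p ∧ f^[p] x = x) ∧ O = (Set.range fun n => f^[n] x) ∧ Stmt5.Attr F x d := by
      rintro O ⟨x, hxI, ⟨p, hp, hxp⟩, rfl⟩
      rcases Stmt5.dichotomy hlam0 hlam1 hDsub hFper hFrc hFpiece' hf hDfin x hxI p hp hxp with
        huniq | ⟨d, hd, hattr⟩
      · obtain ⟨y, hyI, hyper, hyne⟩ := hcaseA x hxI ⟨p, hp, hxp⟩
        exact absurd (huniq y hyI hyper) hyne
      · exact ⟨d, hd, x, hxI, ⟨p, hp, hxp⟩, rfl, hattr⟩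
    choose! Φ hΦD hsel2 using hsel
    choose! X hXI hXper hXorb hXattr using hsel2
    have hinj : Set.InjOn Φ {O : Set ℝ | ∃ x, x ∈ Set.Ico (0:ℝ) 1 ∧
        (∃ p, 1 ≤ p ∧ f^[p] x = x) ∧ O = Set.range fun n => f^[n] x} := by
      intro O1 h1 O2 h2 he
      obtain ⟨p1, hp1, hx1p⟩ := hXper O1 h1
      obtain ⟨p2, hp2, hx2p⟩ := hXper O2 h2
      have hre := Stmt5.attr_inj hFper hf (X O1) (X O2) (Φ O1) (hXI O1 h1) (hXI O2 h2)
        hp1 hp2 hx1p hx2p (hXattr O1 h1) (by rw [he]; exact hXattr O2 h2)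
      rw [hXorb O1 h1, hXorb O2 h2, hre]
    have himg : Φ '' {O : Set ℝ | ∃ x, x ∈ Set.Ico (0:ℝ) 1 ∧
        (∃ p, 1 ≤ p ∧ f^[p] x = x) ∧ O = Set.range fun n => f^[n] x} ⊆ D := by
      rintro _ ⟨O, hO, rfl⟩
      exact hΦD O hO
    have hfin := Set.Finite.of_finite_image (hDfin.subset himg) hinj
    refine ⟨hfin, ?_⟩
    calc _ = (Φ '' _).ncard := (Set.ncard_image_of_injOn hinj).symm
      _ ≤ D.ncard := Set.ncard_le_ncard himg hDfin
      _ = k := hDcard
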